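/- Let K = (k_0, …, k_N) be a switching policy, let J ∈ {0, …, N−1} be an index such that k_J − k_{J−1} ≥ 2 if J ≥ 1 (and k_0 ≥ 1 if J = 0), and let K' = (k'_0, …, k'_N) be the policy with k'_J = k_J − 1 and k'_i = k_i for all i ≠ J. Then B(K) ≥ B(K'), i.e., decreasing a single switching point by one can only decrease the expected number of workers in the back room. -/

import Mathlib

open Finset

/-- A switching policy: `k 0 ≥ 0`, `k i - k (i-1) ≥ 1` for `1 ≤ i ≤ N`, and `k N = S`. -/
def IsPolicy (N : ℕ) (S : ℤ) (k : ℕ → ℤ) : Prop :=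
  0 ≤ k 0 ∧ (∀ i : ℕ, 1 ≤ i → i ≤ N → 1 ≤ k i - k (i - 1)) ∧ k N = S

/-- `X_i = ∏_{g=1}^{i-1} (1/g)^(k_g - k_{g-1})`. -/
noncomputable def Xcoef (k : ℕ → ℤ) (i : ℕ) : ℝ :=
  ∏ g ∈ Finset.Icc 1 (i - 1), ((1 : ℝ) / (g : ℝ)) ^ (k g - k (g - 1))

/-- `β (k 0) = 1` and, for `1 ≤ i ≤ N` and `k (i-1) + 1 ≤ j ≤ k i`,
`β j = (λ/μ)^(j - k 0) * (1/i)^(j - k (i-1)) * X_i`. -/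
def IsBeta (lam mu : ℝ) (N : ℕ) (k : ℕ → ℤ) (β : ℤ → ℝ) : Prop :=
  β (k 0) = 1 ∧
  ∀ i : ℕ, 1 ≤ i → i ≤ N → ∀ j : ℤ, k (i - 1) + 1 ≤ j → j ≤ k i →
    β j = (lam / mu) ^ (j - k 0) * ((1 : ℝ) / (i : ℝ)) ^ (j - k (i - 1)) * Xcoef k i

/-- Steady-state probabilities `P j = β j / Σ_{m=k 0}^{S} β m`. -/
noncomputable def Pfun (S : ℤ) (k : ℕ → ℤ) (β : ℤ → ℝ) (j : ℤ) : ℝ :=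
  β j / ∑ m ∈ Finset.Icc (k 0) S, β m

/-- Expected number of front-room workers. -/
noncomputable def Fval (N : ℕ) (S : ℤ) (k : ℕ → ℤ) (β : ℤ → ℝ) : ℝ :=
  ∑ i ∈ Finset.Icc 1 N, ∑ j ∈ Finset.Icc (k (i - 1) + 1) (k i), (i : ℝ) * Pfun S k β j

/-- Expected number of back-room workers. -/
noncomputable def Bval (N : ℕ) (S : ℤ) (k : ℕ → ℤ) (β : ℤ → ℝ) : ℝ :=
  (N : ℝ) - Fval N S k β

/-- Expected number of customers in the front room. -/
noncomputable def Lval (S : ℤ) (k : ℕ → ℤ) (β : ℤ → ℝ) : ℝ :=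
  ∑ j ∈ Finset.Icc (k 0) S, (j : ℝ) * Pfun S k β j

/-- Expected waiting time `W_q = L / (λ (1 - P S)) - 1/μ`. -/
noncomputable def Wq (lam mu : ℝ) (S : ℤ) (k : ℕ → ℤ) (β : ℤ → ℝ) : ℝ :=
  Lval S k β / (lam * (1 - Pfun S k β S)) - 1 / mu

section Infra

variable {lam mu : ℝ} {N : ℕ} {S : ℤ} {k : ℕ → ℤ} {β : ℤ → ℝ}

lemma policy_mono (hk : IsPolicy N S k) : ∀ a b : ℕ, a ≤ b → b ≤ N → k a ≤ k b := by
  intro a b hab hbN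
  induction b with
  | zero => simp [Nat.le_zero.mp hab]
  | succ n ih =>
    rcases Nat.eq_or_lt_of_le hab with h | h
    · exact le_of_eq (by rw [h])
    · have h1 : k a ≤ k n := ih (by omega) (by omega)
      have h2 := hk.2.1 (n+1) (by omega) hbN
      simp only [Nat.add_sub_cancel] at h2
      omega

lemma policy_cover (hk : IsPolicy N S k) :
    ∀ {n : ℕ}, n ≤ N → ∀ {m : ℤ}, k 0 < m → m ≤ k n →
      ∃ i : ℕ, 1 ≤ i ∧ i ≤ n ∧ k (i - 1) < m ∧ m ≤ k i := by
  intro n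
  induction n with
  | zero => intro _ m h1 h2; omega
  | succ n ih =>
    intro hn m h1 h2
    by_cases hc : m ≤ k n
    · obtain ⟨i, hi⟩ := ih (by omega) h1 hc
      exact ⟨i, hi.1, by omega, hi.2.2⟩
    · exact ⟨n + 1, by omega, by omega, by simpa using hc, h2⟩

lemma Xcoef_pos (k : ℕ → ℤ) (i : ℕ) : 0 < Xcoef k i := by
  apply Finset.prod_pos
  intro g hg
  simp only [Finset.mem_Icc] at hg
  have : (0:ℝ) < (g:ℝ) := by exact_mod_cast hg.1
  positivity

noncomputable def phi (lam mu : ℝ) (k : ℕ → ℤ) (i : ℕ) (j : ℤ) : ℝ :=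
  (lam / mu) ^ (j - k 0) * ((1 : ℝ) / (i : ℝ)) ^ (j - k (i - 1)) * Xcoef k i

lemma phi_pos (hlam : 0 < lam) (hmu : 0 < mu) {i : ℕ} (hi : 1 ≤ i) (j : ℤ) :
    0 < phi lam mu k i j := by
  have h1 : (0:ℝ) < lam / mu := div_pos hlam hmu
  have h2 : (0:ℝ) < (1:ℝ) / (i:ℝ) := by
    have : (0:ℝ) < (i:ℝ) := by exact_mod_cast hi
    positivity
  exact mul_pos (mul_pos (zpow_pos h1 _) (zpow_pos h2 _)) (Xcoef_pos k i)

lemma Xcoef_succ (k : ℕ → ℤ) {i : ℕ} (hi : 1 ≤ i) :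
    Xcoef k (i + 1) = Xcoef k i * ((1 : ℝ) / (i : ℝ)) ^ (k i - k (i - 1)) := by
  cases i with
  | zero => omega
  | succ n =>
    unfold Xcoef
    rw [show n + 1 + 1 - 1 = n + 1 by omega]
    rw [Finset.prod_Icc_succ_top (by omega)]
    rw [show n + 1 - 1 = n by omega]

lemma beta_eq_phi (hk : IsPolicy N S k) (hβ : IsBeta lam mu N k β)
    {i : ℕ} (hi1 : 1 ≤ i) (hiN : i ≤ N) {j : ℤ} (hj1 : k (i - 1) ≤ j) (hj2 : j ≤ k i) :
    β j = phi lam mu k i j := by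
  rcases eq_or_lt_of_le hj1 with h | h
  · -- boundary j = k (i-1)
    subst h
    rcases Nat.eq_or_lt_of_le hi1 with h1 | h1
    · -- i = 1
      subst h1
      simp only [Nat.sub_self] at *
      rw [hβ.1]
      unfold phi Xcoef
      norm_num
    · -- i ≥ 2
      obtain ⟨m, rfl⟩ := Nat.exists_eq_add_of_le (show 1 + 1 ≤ i by omega)
      have hm1 : 1 ≤ 1 + m := by omega
      have heq : (1 + 1 + m) - 1 = 1 + m := by omega
      rw [heq]
      have hb := hβ.2 (1 + m) hm1 (by omega) (k (1 + m))
        (by have := hk.2.1 (1 + m) hm1 (by omega); omega) le_rfl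
      rw [hb]
      unfold phi
      rw [heq, show (1 + 1 + m : ℕ) = (1 + m) + 1 by omega, Xcoef_succ k hm1]
      rw [sub_self, zpow_zero]
      ring
  · exact hβ.2 i hi1 hiN j (by omega) hj2

lemma beta_pos (hlam : 0 < lam) (hmu : 0 < mu)
    (hk : IsPolicy N S k) (hβ : IsBeta lam mu N k β)
    {m : ℤ} (h1 : k 0 ≤ m) (h2 : m ≤ S) : 0 < β m := by
  rcases eq_or_lt_of_le h1 with h | h
  · rw [← h, hβ.1]; norm_num
  · obtain ⟨i, hi1, hiN, hia, hib⟩ := policy_cover hk le_rfl h (by rw [hk.2.2]; exact h2)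
    rw [beta_eq_phi hk hβ hi1 hiN (le_of_lt hia) hib]
    exact phi_pos hlam hmu hi1 m

lemma phi_step (hlam : 0 < lam) (hmu : 0 < mu) {i : ℕ} (hi : 1 ≤ i) (j : ℤ) :
    (i : ℝ) * phi lam mu k i (j + 1) = (lam / mu) * phi lam mu k i j := by
  have hr : (lam / mu) ≠ 0 := ne_of_gt (div_pos hlam hmu)
  have hi0 : ((i:ℝ)) ≠ 0 := by positivity
  have hinv : ((1:ℝ) / (i:ℝ)) ≠ 0 := by positivity
  unfold phi
  rw [show j + 1 - k 0 = (j - k 0) + 1 by ring, show j + 1 - k (i-1) = (j - k (i-1)) + 1 by ring,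
    zpow_add_one₀ hr, zpow_add_one₀ hinv]
  field_simp

lemma sum_interval (hlam : 0 < lam) (hmu : 0 < mu)
    (hk : IsPolicy N S k) (hβ : IsBeta lam mu N k β)
    {i : ℕ} (hi1 : 1 ≤ i) (hiN : i ≤ N) :
    ∑ j ∈ Finset.Icc (k (i - 1) + 1) (k i), (i : ℝ) * β j
      = (lam / mu) * ∑ j ∈ Finset.Ico (k (i - 1)) (k i), β j := by
  rw [show Finset.Icc (k (i-1) + 1) (k i) = (Finset.Ico (k (i-1)) (k i)).map (addRightEmbedding 1) by
    rw [Finset.map_add_right_Ico]; ext x; simp, Finset.sum_map]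
  rw [Finset.mul_sum]
  apply Finset.sum_congr rfl
  intro j hj
  simp only [Finset.mem_Ico, addRightEmbedding_apply] at *
  rw [beta_eq_phi hk hβ hi1 hiN (by omega) (by omega),
      beta_eq_phi hk hβ hi1 hiN (by omega) (by omega)]
  exact phi_step hlam hmu hi1 j

lemma telescope (hk : IsPolicy N S k) (f : ℤ → ℝ) :
    ∀ {n : ℕ}, n ≤ N →
      ∑ i ∈ Finset.Icc 1 n, ∑ j ∈ Finset.Ico (k (i - 1)) (k i), f j
        = ∑ j ∈ Finset.Ico (k 0) (k n), f j := by
  intro n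
  induction n with
  | zero => simp
  | succ n ih =>
    intro hn
    rw [Finset.sum_Icc_succ_top (by omega), ih (by omega)]
    rw [show n + 1 - 1 = n by omega]
    rw [← Finset.sum_union (Finset.Ico_disjoint_Ico_consecutive _ _ _),
      Finset.Ico_union_Ico_eq_Ico (policy_mono hk 0 n (by omega) (by omega))
        (policy_mono hk n (n+1) (by omega) (by omega))]

lemma Fval_eq (hlam : 0 < lam) (hmu : 0 < mu) (hk : IsPolicy N S k) (hβ : IsBeta lam mu N k β) :
    Fval N S k β = (lam / mu) * (1 - β S / ∑ m ∈ Finset.Icc (k 0) S, β m) := by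
  have hk0S : k 0 ≤ S := by rw [← hk.2.2]; exact policy_mono hk 0 N (by omega) le_rfl
  have hG : (0:ℝ) < ∑ m ∈ Finset.Icc (k 0) S, β m := by
    apply Finset.sum_pos
    · intro m hm
      simp only [Finset.mem_Icc] at hm
      exact beta_pos hlam hmu hk hβ hm.1 hm.2
    · exact ⟨k 0, by simp [hk0S]⟩
  set G := ∑ m ∈ Finset.Icc (k 0) S, β m with hGdef
  have key : Fval N S k β = (∑ i ∈ Finset.Icc 1 N, ∑ j ∈ Finset.Icc (k (i-1) + 1) (k i), (i:ℝ) * β j) / G := by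
    unfold Fval Pfun
    rw [Finset.sum_div]
    apply Finset.sum_congr rfl
    intro i _
    rw [Finset.sum_div]
    apply Finset.sum_congr rfl
    intro j _
    rw [mul_div_assoc]
  rw [key]
  have h2 : ∑ i ∈ Finset.Icc 1 N, ∑ j ∈ Finset.Icc (k (i-1) + 1) (k i), (i:ℝ) * β j
      = (lam / mu) * ∑ j ∈ Finset.Ico (k 0) S, β j := by
    have ht := telescope hk β (le_refl N)
    rw [hk.2.2] at ht
    rw [← ht, Finset.mul_sum]
    exact Finset.sum_congr rfl fun i hi => by
      simp only [Finset.mem_Icc] at hi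
      exact sum_interval hlam hmu hk hβ hi.1 hi.2
  have h3 : ∑ j ∈ Finset.Ico (k 0) S, β j = G - β S := by
    have : Finset.Icc (k 0) S = insert S (Finset.Ico (k 0) S) := by
      ext x; simp; omega
    rw [hGdef, this, Finset.sum_insert (by simp)]
    ring
  rw [h2, h3, mul_div_assoc, sub_div, div_self (ne_of_gt hG)]

end Infra

section Main

variable {lam mu : ℝ} {N : ℕ} {S : ℤ} {k k' : ℕ → ℤ} {β β' : ℤ → ℝ}

lemma Gpos (hlam : 0 < lam) (hmu : 0 < mu) (hk : IsPolicy N S k) (hβ : IsBeta lam mu N k β) :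
    (0:ℝ) < ∑ m ∈ Finset.Icc (k 0) S, β m := by
  have hk0S : k 0 ≤ S := by rw [← hk.2.2]; exact policy_mono hk 0 N (by omega) le_rfl
  apply Finset.sum_pos
  · intro m hm
    simp only [Finset.mem_Icc] at hm
    exact beta_pos hlam hmu hk hβ hm.1 hm.2
  · exact ⟨k 0, by simp [hk0S]⟩

/-- Decreasing a single switching point by one can only decrease the
expected number of workers in the back room. -/
theorem b_single_decrease
    (lam mu : ℝ) (hlam : 0 < lam) (hmu : 0 < mu)
    (N : ℕ) (hN : 1 ≤ N) (S : ℤ) (hS : (N : ℤ) ≤ S)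
    (k k' : ℕ → ℤ) (hk : IsPolicy N S k)
    (J : ℕ) (hJ : J < N)
    (hgap1 : 1 ≤ J → 2 ≤ k J - k (J - 1))
    (hgap0 : J = 0 → 1 ≤ k 0)
    (hk'J : k' J = k J - 1)
    (hk'ne : ∀ i : ℕ, i ≠ J → k' i = k i)
    (β β' : ℤ → ℝ)
    (hβ : IsBeta lam mu N k β) (hβ' : IsBeta lam mu N k' β') :
    Bval N S k' β' ≤ Bval N S k β := by
  have hr : (0:ℝ) < lam / mu := div_pos hlam hmu
  -- k' is a policy
  have hk' : IsPolicy N S k' := by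
    refine ⟨?_, ?_, ?_⟩
    · rcases Nat.eq_zero_or_pos J with h0 | h1
      · have := hgap0 h0
        rw [h0] at hk'J
        omega
      · rw [hk'ne 0 (by omega)]; exact hk.1
    · intro i hi1 hiN
      by_cases hiJ : i = J
      · subst hiJ
        rw [hk'J, hk'ne (i - 1) (by omega)]
        have := hgap1 hi1
        omega
      · by_cases hiJ1 : i = J + 1
        · subst hiJ1
          rw [hk'ne (J + 1) (by omega), show J + 1 - 1 = J by omega, hk'J]
          have := hk.2.1 (J + 1) (by omega) hiN
          rw [show J + 1 - 1 = J by omega] at this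
          omega
        · rw [hk'ne i hiJ, hk'ne (i - 1) (by omega)]
          exact hk.2.1 i hi1 hiN
    · rw [hk'ne N (by omega)]; exact hk.2.2
  have hkmono : ∀ a b : ℕ, a ≤ b → b ≤ N → k a ≤ k b := policy_mono hk
  have hk0S : k 0 ≤ S := by rw [← hk.2.2]; exact hkmono 0 N (by omega) le_rfl
  set G := ∑ m ∈ Finset.Icc (k 0) S, β m with hGdef
  set G' := ∑ m ∈ Finset.Icc (k' 0) S, β' m with hG'def
  have hG : 0 < G := Gpos hlam hmu hk hβ
  have hG' : 0 < G' := Gpos hlam hmu hk' hβ'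
  -- reduce to comparison of β S / G
  have main : β' S / G' ≤ β S / G := by
    rcases Nat.eq_zero_or_pos J with hJ0 | hJ1
    · -- CASE J = 0
      subst hJ0
      have hk'0 : k' 0 = k 0 - 1 := hk'J
      have hX0 : ∀ i : ℕ, Xcoef k' i = Xcoef k i := by
        intro i
        unfold Xcoef
        apply Finset.prod_congr rfl
        intro g hg
        simp only [Finset.mem_Icc] at hg
        rcases Nat.eq_or_lt_of_le hg.1 with h1 | h1
        · rw [← h1]; norm_num
        · rw [hk'ne g (by omega), hk'ne (g - 1) (by omega)]
      have hE0 : ∀ j : ℤ, k 0 ≤ j → j ≤ S → β' j = (lam / mu) * β j := by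
        intro j hj1 hj2
        have hc0 : k' 0 < j := by omega
        have hcN : j ≤ k' N := by rw [hk'.2.2]; exact hj2
        obtain ⟨i, hi1, hiN, hia, hib⟩ := policy_cover hk' le_rfl hc0 hcN
        have hkim : k (i - 1) ≤ j := by
          rcases Nat.eq_or_lt_of_le hi1 with h1 | h1
          · rw [← h1] at hia ⊢; simp only [Nat.sub_self] at hia ⊢; exact hj1
          · rw [hk'ne (i - 1) (by omega)] at hia; omega
        have hki : j ≤ k i := by rw [hk'ne i (by omega)] at hib; exact hib
        rw [beta_eq_phi hk' hβ' hi1 hiN (le_of_lt hia) hib,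
            beta_eq_phi hk hβ hi1 hiN hkim hki]
        unfold phi
        rw [hX0, hk'0]
        have hmid : ((1:ℝ) / (i:ℝ)) ^ (j - k' (i - 1)) = ((1:ℝ) / (i:ℝ)) ^ (j - k (i - 1)) := by
          rcases Nat.eq_or_lt_of_le hi1 with h1 | h1
          · rw [← h1]; norm_num
          · rw [hk'ne (i - 1) (by omega)]
        rw [hmid, show j - (k 0 - 1) = (j - k 0) + 1 by ring, zpow_add_one₀ (ne_of_gt hr)]
        ring
      have hG'eq : G' = 1 + (lam / mu) * G := by
        rw [hG'def, hk'0,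
          show Finset.Icc (k 0 - 1) S = insert (k 0 - 1) (Finset.Icc (k 0) S) by ext x; simp; omega,
          Finset.sum_insert (by simp)]
        have h1 : β' (k 0 - 1) = 1 := by rw [← hk'0]; exact hβ'.1
        rw [h1, hGdef, Finset.mul_sum]
        congr 1
        apply Finset.sum_congr rfl
        intro m hm
        simp only [Finset.mem_Icc] at hm
        exact hE0 m hm.1 hm.2
      have hβ'S : β' S = (lam / mu) * β S := hE0 S hk0S le_rfl
      rw [hβ'S, hG'eq]
      have hbSpos : 0 < β S := beta_pos hlam hmu hk hβ hk0S le_rfl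
      rw [div_le_div_iff₀ (by positivity) hG]
      nlinarith [mul_pos hr hG, mul_pos hr hbSpos]
    · -- CASE J ≥ 1
      have hk'0 : k' 0 = k 0 := hk'ne 0 (by omega)
      set t : ℝ := (J : ℝ) / ((J : ℝ) + 1) with htdef
      have hJR : (0:ℝ) < (J:ℝ) := by exact_mod_cast hJ1
      have ht : 0 < t := by positivity
      have ht1 : t ≤ 1 := by rw [htdef, div_le_one (by positivity)]; linarith
      have hJ1cast : ((J + 1 : ℕ) : ℝ) = (J : ℝ) + 1 := by push_cast; ring
      -- Xcoef comparisons
      have hXA : ∀ i : ℕ, i ≤ J → Xcoef k' i = Xcoef k i := by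
        intro i hi
        unfold Xcoef
        apply Finset.prod_congr rfl
        intro g hg
        simp only [Finset.mem_Icc] at hg
        rw [hk'ne g (by omega), hk'ne (g - 1) (by omega)]
      have hXB : Xcoef k' (J + 1) = (J : ℝ) * Xcoef k (J + 1) := by
        obtain ⟨m, rfl⟩ : ∃ m, J = m + 1 := ⟨J - 1, by omega⟩
        rw [show m + 1 + 1 = (m + 1) + 1 by rfl, Xcoef_succ k' (by omega), Xcoef_succ k (by omega)]
        rw [show Xcoef k' (m + 1) = Xcoef k (m + 1) from hXA (m + 1) le_rfl]
        rw [hk'J, hk'ne (m + 1 - 1) (by omega)]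
        have hu : ((1:ℝ) / ((m + 1 : ℕ):ℝ)) ≠ 0 := by
          have : (0:ℝ) < ((m + 1 : ℕ):ℝ) := by exact_mod_cast Nat.succ_pos m
          positivity
        rw [show k (m + 1) - 1 - k (m + 1 - 1) = (k (m + 1) - k (m + 1 - 1)) + (-1) by ring,
          zpow_add₀ hu, zpow_neg_one]
        have : ((1:ℝ) / ((m + 1 : ℕ):ℝ))⁻¹ = ((m + 1 : ℕ):ℝ) := by
          rw [one_div, inv_inv]
        rw [this]
        push_cast
        ring
      have hXC : ∀ i : ℕ, J + 2 ≤ i → Xcoef k' i = t * Xcoef k i := by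
        intro i hi
        induction i, hi using Nat.le_induction with
        | base =>
          rw [show J + 2 = (J + 1) + 1 by rfl, Xcoef_succ k' (by omega), Xcoef_succ k (by omega),
            hXB, hk'ne (J + 1) (by omega), show J + 1 - 1 = J by omega, hk'J]
          have hu : ((1:ℝ) / ((J + 1 : ℕ):ℝ)) ≠ 0 := by
            have : (0:ℝ) < ((J + 1 : ℕ):ℝ) := by exact_mod_cast Nat.succ_pos J
            positivity
          rw [show k (J + 1) - (k J - 1) = (k (J + 1) - k J) + 1 by ring, zpow_add_one₀ hu]
          rw [htdef, hJ1cast]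
          ring
        | succ n hn ih =>
          rw [Xcoef_succ k' (by omega), Xcoef_succ k (by omega), ih,
            hk'ne n (by omega), hk'ne (n - 1) (by omega)]
          ring
      -- pointwise equalities
      have hE2 : ∀ i : ℕ, ∀ j : ℤ, J + 1 ≤ i → i ≤ N → k (i - 1) ≤ j → j ≤ k i →
          β' j = t * β j := by
        intro i j hi1 hiN hj1 hj2
        have hik : k' i = k i := hk'ne i (by omega)
        have hj1' : k' (i - 1) ≤ j := by
          by_cases h : i = J + 1
          · rw [h, show J + 1 - 1 = J by omega, hk'J]
            rw [h, show J + 1 - 1 = J by omega] at hj1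
            omega
          · rw [hk'ne (i - 1) (by omega)]; exact hj1
        rw [beta_eq_phi hk' hβ' (by omega) hiN hj1' (by rw [hik]; exact hj2),
            beta_eq_phi hk hβ (by omega) hiN hj1 hj2]
        unfold phi
        rw [hk'0]
        by_cases h : i = J + 1
        · subst h
          rw [show J + 1 - 1 = J by omega, hk'J, hXB]
          have hu : ((1:ℝ) / ((J + 1 : ℕ):ℝ)) ≠ 0 := by
            have : (0:ℝ) < ((J + 1 : ℕ):ℝ) := by exact_mod_cast Nat.succ_pos J
            positivity
          rw [show j - (k J - 1) = (j - k J) + 1 by ring, zpow_add_one₀ hu]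
          rw [htdef, hJ1cast]
          ring
        · rw [hk'ne (i - 1) (by omega), hXC i (by omega)]
          ring
      have hE1 : ∀ i : ℕ, ∀ j : ℤ, 1 ≤ i → i ≤ J → k (i - 1) ≤ j → j ≤ k' i →
          β' j = β j := by
        intro i j hi1 hiJ hj1 hj2
        have hki' : k' i ≤ k i := by
          by_cases h : i = J
          · rw [h, hk'J]; omega
          · rw [hk'ne i h]
        have hki'1 : k' (i - 1) = k (i - 1) := hk'ne (i - 1) (by omega)
        rw [beta_eq_phi hk' hβ' hi1 (by omega) (by rw [hki'1]; exact hj1) hj2,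
            beta_eq_phi hk hβ hi1 (by omega) hj1 (le_trans hj2 hki')]
        unfold phi
        rw [hk'0, hki'1, hXA i hiJ]
      -- pointwise inequality on [k 0, S]
      have hpt : ∀ j : ℤ, k 0 ≤ j → j ≤ S → t * β j ≤ β' j := by
        intro j hj1 hj2
        rcases eq_or_lt_of_le hj1 with h | h
        · rw [← h, hβ.1, ← hk'0, hβ'.1]; linarith
        · obtain ⟨i, hi1, hiN, hia, hib⟩ := policy_cover hk le_rfl h (by rw [hk.2.2]; exact hj2)
          by_cases hcase : k J ≤ j
          · -- use E2 with index max i (J+1)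
            by_cases hiJ : J + 1 ≤ i
            · rw [hE2 i j hiJ hiN (le_of_lt hia) hib]
            · have : j ≤ k (J + 1) := le_trans hib (hkmono i (J+1) (by omega) (by omega))
              rw [hE2 (J + 1) j le_rfl (by omega) (by rw [show J + 1 - 1 = J by omega]; exact hcase) this]
          · -- j < k J : i ≤ J and j ≤ k' i
            have hiJ : i ≤ J := by
              by_contra hcon
              have : k J ≤ k (i - 1) := hkmono J (i-1) (by omega) (by omega)
              omega
            have hjki' : j ≤ k' i := by
              by_cases h2 : i = J
              · rw [h2, hk'J]; omega
              · rw [hk'ne i h2]; exact hib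
            rw [hE1 i j hi1 hiJ (le_of_lt hia) hjki']
            have := beta_pos hlam hmu hk hβ (by omega : k 0 ≤ j) hj2
            nlinarith
      -- conclude
      have hβ'S : β' S = t * β S := by
        apply hE2 N S (by omega) le_rfl
        · rw [← hk.2.2]; exact hkmono (N-1) N (by omega) (by omega)
        · rw [hk.2.2]
      have hGG' : t * G ≤ G' := by
        rw [hG'def, hk'0, hGdef, Finset.mul_sum]
        apply Finset.sum_le_sum
        intro m hm
        simp only [Finset.mem_Icc] at hm
        exact hpt m hm.1 hm.2
      have hbS : 0 < β S := beta_pos hlam hmu hk hβ hk0S le_rfl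
      rw [hβ'S, div_le_div_iff₀ hG' hG]
      calc t * β S * G = β S * (t * G) := by ring
        _ ≤ β S * G' := by nlinarith
  -- assemble
  unfold Bval
  have hF : Fval N S k β ≤ Fval N S k' β' := by
    rw [Fval_eq hlam hmu hk hβ, Fval_eq hlam hmu hk' hβ', ← hGdef, ← hG'def]
    apply mul_le_mul_of_nonneg_left _ (le_of_lt hr)
    linarith
  linarith


end Main
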